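/- For any prime p congruent to 1 modulo 4, the polynomial T^{2p} - p^p factors over ℚ as (T^2 - p) times two irreducible polynomials of degree p - 1; in particular T^2 - p divides T^{2p} - p^p. -/

import Mathlib

open Polynomial IntermediateField

lemma prim_of_prime {M : Type*} [CommMonoid M] {x : M} {p : ℕ} (hp : p.Prime)
    (h1 : x ^ p = 1) (h2 : x ≠ 1) : IsPrimitiveRoot x p := by
  have ho : orderOf x ∣ p := orderOf_dvd_of_pow_eq_one h1
  rcases hp.eq_one_or_self_of_dvd _ ho with h | h
  · exact absurd (orderOf_eq_one_iff.mp h) h2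
  · have := IsPrimitiveRoot.orderOf x
    rwa [h] at this

lemma sqrt_p_aux (p : ℕ) (hmod : p % 4 = 1) [Fact p.Prime] (hp2 : p ≠ 2)
    (F : IntermediateField ℚ ℂ) (ψ : AddChar (ZMod p) F) (hψ : ψ.IsPrimitive) :
    ∃ g : F, g ^ 2 = (p : F) := by
  let χ : MulChar (ZMod p) F := (quadraticChar (ZMod p)).ringHomComp (Int.castRingHom F)
  have hχ1 : χ ≠ 1 := by
    refine (MulChar.ringHomComp_ne_one_iff ?_).mpr ?_
    · exact fun a b h => by exact_mod_cast Int.cast_injective (by exact_mod_cast h)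
    · exact quadraticChar_ne_one (by rw [ZMod.ringChar_zmod_n]; exact hp2)
  have hχq : χ.IsQuadratic := (quadraticChar_isQuadratic (ZMod p)).comp _
  refine ⟨gaussSum χ ψ, ?_⟩
  rw [gaussSum_sq hχ1 hχq hψ]
  have hneg : χ (-1) = 1 := by
    have h4 : quadraticChar (ZMod p) (-1) = 1 := by
      rw [quadraticChar_neg_one (by rw [ZMod.ringChar_zmod_n]; exact hp2), ZMod.card]
      rw [ZMod.χ₄_nat_eq_if_mod_four]
      have h2 : p % 2 = 1 := by omega
      simp [h2, hmod]
    rw [show χ (-1) = (Int.castRingHom F) ((quadraticChar (ZMod p)) (-1)) from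
      MulChar.ringHomComp_apply _ _ _, h4]
    simp
  rw [hneg, one_mul, ZMod.card]

lemma deg_aux (p : ℕ) (hp : p.Prime) (hmod : p % 4 = 1) (z : ℂ)
    (h1 : z ^ (2 * p) = (p : ℂ) ^ p) (h2 : z ^ 2 ≠ (p : ℂ)) :
    Module.finrank ℚ ℚ⟮z⟯ = p - 1 := by
  haveI : Fact p.Prime := ⟨hp⟩
  have hp2 : p ≠ 2 := by omega
  have hp0 : (p : ℂ) ≠ 0 := Nat.cast_ne_zero.mpr hp.pos.ne'
  set ζ : ℂ := z ^ 2 / p with hζdef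
  have hζp : ζ ^ p = 1 := by
    rw [hζdef, div_pow, ← pow_mul, mul_comm 2 p, mul_comm p 2, h1, div_self (pow_ne_zero _ hp0)]
  have hζ1 : ζ ≠ 1 := by
    intro h
    exact h2 (by rw [hζdef, div_eq_one_iff_eq hp0] at h; exact h)
  have hprim : IsPrimitiveRoot ζ p := prim_of_prime hp hζp hζ1
  have hζint : IsIntegral ℚ ζ := by
    refine ⟨X ^ p - 1, monic_X_pow_sub_C 1 hp.pos.ne', ?_⟩
    simp [hζp]
  have hζ_mem : ζ ∈ ℚ⟮z⟯ := by
    have hz : z ∈ ℚ⟮z⟯ := mem_adjoin_simple_self ℚ z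
    have hq : (algebraMap ℚ ℂ) ((p : ℚ)⁻¹) ∈ ℚ⟮z⟯ := IntermediateField.algebraMap_mem _ _
    have : z ^ 2 * (algebraMap ℚ ℂ) ((p : ℚ)⁻¹) ∈ ℚ⟮z⟯ := mul_mem (pow_mem hz 2) hq
    convert this using 1
    push_cast
    rw [hζdef]
    ring
  have hz_mem : z ∈ ℚ⟮ζ⟯ := by
    set F := ℚ⟮ζ⟯ with hF
    set ζ' : F := AdjoinSimple.gen ℚ ζ with hζ'
    have hcoe : (ζ' : ℂ) = ζ := rfl
    have hinj : Function.Injective (algebraMap F ℂ) := (algebraMap F ℂ).injective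
    have hζ'p : ζ' ^ p = 1 := by
      apply hinj
      push_cast [hcoe]
      exact hζp
    let ψ : AddChar (ZMod p) F := AddChar.zmodChar p hζ'p
    have hprim' : IsPrimitiveRoot ζ' p := by
      refine prim_of_prime hp hζ'p ?_
      intro h
      apply hζ1
      rw [← hcoe, h]; rfl
    have hψ : ψ.IsPrimitive := AddChar.zmodChar_primitive_of_primitive_root p hprim'
    obtain ⟨g, hg⟩ := sqrt_p_aux p hmod hp2 F ψ hψ
    -- ζ₁ with ζ₁ ^ 2 = ζ
    set ζ₁ : F := ζ' ^ ((p + 1) / 2) with hζ₁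
    have hζ₁sq : ((ζ₁ : ℂ)) ^ 2 = ζ := by
      push_cast [hζ₁, hcoe]
      rw [← pow_mul]
      have : (p + 1) / 2 * 2 = p + 1 := by omega
      rw [this, pow_succ, hζp, one_mul]
    set w : F := g * ζ₁ with hw
    have hwsq : ((w : ℂ)) ^ 2 = z ^ 2 := by
      push_cast [hw]
      rw [mul_pow, hζ₁sq]
      have hgC : ((g : ℂ)) ^ 2 = (p : ℂ) := by
        have := congrArg (algebraMap F ℂ) hg
        push_cast at this
        simpa using this
      rw [hgC, hζdef]
      field_simp
    have : z = (w : ℂ) ∨ z = -(w : ℂ) := by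
      have h0 : (z - w) * (z + w) = 0 := by ring_nf; rw [← hwsq]; ring
      rcases mul_eq_zero.mp h0 with h | h
      · left; linear_combination h
      · right; linear_combination h
    rcases this with h | h
    · rw [h]; exact w.2
    · rw [h]; exact neg_mem w.2
  have heq : ℚ⟮z⟯ = ℚ⟮ζ⟯ :=
    le_antisymm (adjoin_simple_le_iff.mpr hz_mem) (adjoin_simple_le_iff.mpr hζ_mem)
  rw [heq, adjoin.finrank hζint, ← cyclotomic_eq_minpoly_rat hprim hp.pos,
    natDegree_cyclotomic, Nat.totient_prime hp]

theorem stmt_5 (p : ℕ) (hp : p.Prime) (hmod : p % 4 = 1) :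
    (((X : ℚ[X]) ^ 2 - C ((p : ℚ))) ∣ ((X : ℚ[X]) ^ (2 * p) - C ((p : ℚ)) ^ p)) ∧
    ∃ f g : ℚ[X], Irreducible f ∧ Irreducible g ∧
      f.natDegree = p - 1 ∧ g.natDegree = p - 1 ∧
      ((X : ℚ[X]) ^ (2 * p) - C ((p : ℚ)) ^ p)
        = ((X : ℚ[X]) ^ 2 - C ((p : ℚ))) * (f * g) := by
  classical
  have hp0 : p ≠ 0 := hp.pos.ne'
  have hple : 2 ≤ p := hp.two_le
  have hpQ : ((p : ℚ)) ≠ 0 := Nat.cast_ne_zero.mpr hp0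
  set A : ℚ[X] := (X : ℚ[X]) ^ 2 - C ((p : ℚ)) with hA
  set Q : ℚ[X] := ∑ i ∈ Finset.range p, ((X : ℚ[X]) ^ 2) ^ i * (C ((p : ℚ))) ^ (p - 1 - i) with hQ
  have key : A * Q = (X : ℚ[X]) ^ (2 * p) - C ((p : ℚ)) ^ p := by
    rw [hA, hQ, mul_comm, geom_sum₂_mul, ← pow_mul]
  -- monicity and degrees
  have hAm : A.Monic := monic_X_pow_sub_C _ two_ne_zero
  have hRm : ((X : ℚ[X]) ^ (2 * p) - C ((p : ℚ)) ^ p).Monic := by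
    rw [← C_pow]; exact monic_X_pow_sub_C _ (by omega)
  have hQm : Q.Monic := hAm.of_mul_monic_left (key ▸ hRm)
  have hQ0 : Q ≠ 0 := hQm.ne_zero
  have hdegR : ((X : ℚ[X]) ^ (2 * p) - C ((p : ℚ)) ^ p).natDegree = 2 * p := by
    rw [← C_pow]; exact natDegree_X_pow_sub_C
  have hdegA : A.natDegree = 2 := natDegree_X_pow_sub_C
  have hdegQ : Q.natDegree = 2 * p - 2 := by
    have := natDegree_mul hAm.ne_zero hQ0
    rw [key, hdegR, hdegA] at this
    omega
  -- every monic irreducible factor of Q has degree p - 1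
  have hfac : ∀ r : ℚ[X], r.Monic → Irreducible r → r ∣ Q → r.natDegree = p - 1 := by
    intro r hrm hirr hdvd
    -- get a complex root of r
    have hrd : 0 < (r.map (algebraMap ℚ ℂ)).degree := by
      rw [degree_map]
      exact natDegree_pos_iff_degree_pos.mp hirr.natDegree_pos
    obtain ⟨z, hz⟩ := Complex.exists_root hrd
    have hz0 : aeval z r = 0 := by
      rwa [aeval_def, eval₂_eq_eval_map]
    have hQz : aeval z Q = 0 := by
      obtain ⟨s, hs⟩ := hdvd
      rw [hs, map_mul, hz0, zero_mul]
    -- z satisfies z^(2p) = p^p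
    have h1 : z ^ (2 * p) = (p : ℂ) ^ p := by
      have := congrArg (aeval z) key
      rw [map_mul, hQz, mul_zero] at this
      have h2 := this.symm
      simp only [map_sub, map_pow, aeval_X, aeval_C] at h2
      have : z ^ (2 * p) - (algebraMap ℚ ℂ) ((p : ℚ)) ^ p = 0 := h2
      push_cast at this
      exact sub_eq_zero.mp this
    have h2 : z ^ 2 ≠ (p : ℂ) := by
      intro h
      have hval : aeval z Q = ∑ _i ∈ Finset.range p, ((p : ℂ)) ^ (p - 1) := by
        rw [hQ, map_sum]
        refine Finset.sum_congr rfl fun i hi => ?_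
        simp only [map_mul, map_pow, aeval_X, aeval_C, map_natCast]
        rw [h, ← pow_add]
        congr 1
        have := Finset.mem_range.mp hi
        omega
      rw [hQz] at hval
      rw [Finset.sum_const, Finset.card_range, nsmul_eq_mul] at hval
      have hne : (p : ℂ) * (p : ℂ) ^ (p - 1) ≠ 0 :=
        mul_ne_zero (Nat.cast_ne_zero.mpr hp0) (pow_ne_zero _ (Nat.cast_ne_zero.mpr hp0))
      exact hne hval.symm
    have hint : IsIntegral ℚ z := ⟨r, hrm, hz0⟩
    have hmin : minpoly ℚ z = r := (minpoly.eq_of_irreducible_of_monic hirr hz0 hrm).symm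
    rw [← hmin, ← adjoin.finrank hint]
    exact deg_aux p hp hmod z h1 h2
  -- now count the factors of Q
  classical
  set s := UniqueFactorizationMonoid.normalizedFactors Q with hs
  have hmem : ∀ r ∈ s, r.Monic := by
    intro r hr
    have h0 : r ≠ 0 := (UniqueFactorizationMonoid.irreducible_of_normalized_factor r hr).ne_zero
    have := UniqueFactorizationMonoid.normalize_normalized_factor r hr
    rw [← this]
    exact monic_normalize h0
  have hprod : s.prod = Q := by
    have hassoc := UniqueFactorizationMonoid.prod_normalizedFactors hQ0
    exact eq_of_monic_of_associated (by simpa using monic_multiset_prod_of_monic s id (by simpa using hmem)) hQm hassoc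
  have hdeg1 : ∀ r ∈ s, r.natDegree = p - 1 := fun r hr =>
    hfac r (hmem r hr) (UniqueFactorizationMonoid.irreducible_of_normalized_factor r hr)
      (hprod ▸ Multiset.dvd_prod hr)
  have hcard : Multiset.card s = 2 := by
    have hsum : (s.map natDegree).sum = Q.natDegree := by
      rw [← hprod, natDegree_multiset_prod_of_monic _ hmem]
    have hsum2 : (s.map natDegree).sum = Multiset.card s * (p - 1) := by
      rw [Multiset.map_congr rfl hdeg1, Multiset.map_const', Multiset.sum_replicate,
        smul_eq_mul]
    rw [hsum2, hdegQ] at hsum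
    have h2p : 2 * p - 2 = 2 * (p - 1) := by omega
    rw [h2p] at hsum
    exact Nat.eq_of_mul_eq_mul_right (by omega) hsum
  obtain ⟨f, g, hfg⟩ := Multiset.card_eq_two.mp hcard
  have hfm : f ∈ s := by rw [hfg]; simp
  have hgm : g ∈ s := by rw [hfg]; simp
  refine ⟨⟨Q, key.symm⟩, f, g,
    UniqueFactorizationMonoid.irreducible_of_normalized_factor f hfm,
    UniqueFactorizationMonoid.irreducible_of_normalized_factor g hgm,
    hdeg1 f hfm, hdeg1 g hgm, ?_⟩
  rw [← key]
  congr 1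
  rw [← hprod, hfg]
  simp
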